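/- Let ℂ-Alg_fg be the category of finitely generated commutative ℂ-algebras and f : A → B a ℂ-algebra homomorphism such that all ℂ-algebra maps B → ℂ composed with f agree (i.e., f is a pseudo-constant in the opposite category, where points correspond to algebra maps to ℂ). If B admits at least one ℂ-algebra map to ℂ, then f factors through a finitely generated ℂ-algebra that admits exactly one ℂ-algebra map to ℂ. -/

import Mathlib

open Ideal in
/-- Every maximal ideal of a finitely generated `ℂ`-algebra is the kernel of a
`ℂ`-algebra map to `ℂ`. -/
lemma exists_algHom_of_isMaximal (B : Type) [CommRing B] [Algebra ℂ B]
    [Algebra.FiniteType ℂ B] (m : Ideal B) (hm : m.IsMaximal) :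
    ∃ ψ : B →ₐ[ℂ] ℂ, ∀ x, ψ x = 0 → x ∈ m := by
  haveI := hm
  letI : Field (B ⧸ m) := Ideal.Quotient.field m
  have hft : Algebra.FiniteType ℂ (B ⧸ m) :=
    Algebra.FiniteType.of_surjective (Ideal.Quotient.mkₐ ℂ m)
      (Ideal.Quotient.mkₐ_surjective ℂ m)
  have : Module.Finite ℂ (B ⧸ m) := finite_of_finite_type_of_isJacobsonRing ℂ (B ⧸ m)
  have : Algebra.IsIntegral ℂ (B ⧸ m) := Algebra.IsIntegral.of_finite ℂ (B ⧸ m)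
  have hsurj : Function.Surjective (algebraMap ℂ (B ⧸ m)) :=
    IsAlgClosed.algebraMap_bijective_of_isIntegral.2
  have hbij : Function.Bijective (Algebra.ofId ℂ (B ⧸ m)) :=
    ⟨(algebraMap ℂ (B ⧸ m)).injective, hsurj⟩
  let e : ℂ ≃ₐ[ℂ] (B ⧸ m) := AlgEquiv.ofBijective (Algebra.ofId ℂ (B ⧸ m)) hbij
  refine ⟨(e.symm.toAlgHom).comp (Ideal.Quotient.mkₐ ℂ m), fun x hx => ?_⟩
  have h1 : e.symm (Ideal.Quotient.mk m x) = 0 := hx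
  have h0 : Ideal.Quotient.mk m x = 0 := by
    have := congrArg e h1
    simpa using this
  exact (Ideal.Quotient.eq_zero_iff_mem).mp h0

theorem stmt18 (A B : Type) [CommRing A] [CommRing B] [Algebra ℂ A] [Algebra ℂ B]
    [Algebra.FiniteType ℂ A] [Algebra.FiniteType ℂ B]
    (f : A →ₐ[ℂ] B)
    (hpc : ∀ φ ψ : B →ₐ[ℂ] ℂ, φ.comp f = ψ.comp f)
    (hpt : Nonempty (B →ₐ[ℂ] ℂ)) :
    ∃ (W : Type) (_i : CommRing W) (_j : Algebra ℂ W),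
      Algebra.FiniteType ℂ W ∧ (∃! φ : W →ₐ[ℂ] ℂ, True) ∧
      ∃ (g : A →ₐ[ℂ] W) (h : W →ₐ[ℂ] B), h.comp g = f := by
  obtain ⟨φ₀⟩ := hpt
  have : IsJacobsonRing B := isJacobsonRing_of_finiteType (A := ℂ)
  -- key : f a - φ₀ (f a) is nilpotent
  have key : ∀ a : A, IsNilpotent (f a - algebraMap ℂ B (φ₀ (f a))) := by
    intro a
    have hmem : f a - algebraMap ℂ B (φ₀ (f a)) ∈ (⊥ : Ideal B).jacobson := by
      rw [Ideal.jacobson, Ideal.mem_sInf]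
      rintro m ⟨-, hm⟩
      obtain ⟨ψ, hψ⟩ := exists_algHom_of_isMaximal B m hm
      apply hψ
      have := congrArg (fun t : A →ₐ[ℂ] ℂ => t a) (hpc ψ φ₀)
      simp only [AlgHom.comp_apply] at this
      simp [map_sub, this]
    rw [← Ideal.radical_eq_jacobson] at hmem
    exact mem_nilradical.mp hmem
  refine ⟨f.range, inferInstance, inferInstance, ?_, ?_, f.rangeRestrict,
    f.range.val, ?_⟩
  · exact Algebra.FiniteType.of_surjective f.rangeRestrict
      f.rangeRestrict_surjective
  · refine ⟨φ₀.comp f.range.val, trivial, fun χ _ => ?_⟩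
    -- any algebra map on the range is determined on generators f a
    have hval : ∀ (w : f.range) (ρ : f.range →ₐ[ℂ] ℂ)
        (hn : IsNilpotent ((f.range.val w) - algebraMap ℂ B (φ₀ (f.range.val w)))),
        ρ w = φ₀ (f.range.val w) := by
      intro w ρ hn
      have hnw : IsNilpotent (w - algebraMap ℂ f.range (φ₀ (f.range.val w))) := by
        obtain ⟨n, hn⟩ := hn
        refine ⟨n, ?_⟩
        have hinj : Function.Injective f.range.val := Subtype.val_injective
        apply hinj
        simpa [map_sub, map_pow] using hn
      have : IsNilpotent (ρ w - φ₀ (f.range.val w)) := by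
        simpa [map_sub] using hnw.map ρ
      have h0 := this.eq_zero
      linear_combination h0
    ext w
    obtain ⟨a, rfl⟩ := f.rangeRestrict_surjective w
    have h1 := hval (f.rangeRestrict a) χ (by simpa using key a)
    have h2 := hval (f.rangeRestrict a) (φ₀.comp f.range.val) (by simpa using key a)
    rw [h1, h2]
  · ext a
    rfl
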